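/- Let A be an n×n complex Hermitian matrix with eigenvalues λ₁ ≥ λ₂ ≥ ... ≥ λ_n listed in decreasing order with multiplicity, and let q be a natural number with 1 ≤ q ≤ n. Then for every orthonormal family x₁, ..., x_q of vectors in ℂⁿ one has ∑_{i=1}^{q} ⟨x_i, A x_i⟩ ≤ ∑_{i=1}^{q} λ_i, and this bound is attained: there exists an orthonormal family x₁, ..., x_q, consisting of eigenvectors of A for the eigenvalues λ₁, ..., λ_q respectively, with ∑_{i=1}^{q} ⟨x_i, A x_i⟩ = ∑_{i=1}^{q} λ_i. -/

import Mathlib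

open Matrix ComplexOrder

lemma fan_real_key {n q : ℕ} (μ : Fin n → ℝ) (hμ : Antitone μ)
    (hq1 : 1 ≤ q) (hqn : q ≤ n) (d : Fin n → ℝ)
    (hd0 : ∀ k, 0 ≤ d k) (hd1 : ∀ k, d k ≤ 1) (hsum : ∑ k, d k = q) :
    ∑ k, μ k * d k ≤ ∑ i : Fin q, μ (Fin.castLE hqn i) := by
  have hq' : q - 1 < n := by omega
  set t := μ ⟨q - 1, hq'⟩ with ht
  have aux : ∀ g : Fin n → ℝ,
      ∑ k : Fin n, (if (k : ℕ) < q then g k else 0) = ∑ i : Fin q, g (Fin.castLE hqn i) := by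
    intro g
    rw [Finset.sum_ite, Finset.sum_const_zero, add_zero]
    refine Finset.sum_bij' (fun k _ => (⟨(k : ℕ), ?_⟩ : Fin q)) (fun i _ => Fin.castLE hqn i)
      ?_ ?_ ?_ ?_ ?_
    · have := Finset.mem_filter.mp ‹_›; exact this.2
    · intro k hk; exact Finset.mem_univ _
    · intro i hi
      refine Finset.mem_filter.mpr ⟨Finset.mem_univ _, ?_⟩
      exact i.2
    · intro k hk; ext; rfl
    · intro i hi; ext; rfl
    · intro k hk; rfl
  have key : ∀ k : Fin n,
      μ k * d k - (if (k : ℕ) < q then μ k else 0)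
        ≤ t * (d k - (if (k : ℕ) < q then (1:ℝ) else 0)) := by
    intro k
    by_cases h : (k : ℕ) < q
    · have hle : t ≤ μ k := hμ (by simp [Fin.le_def]; omega)
      have := hd1 k
      simp only [h, if_pos]
      nlinarith
    · have hle : μ k ≤ t := hμ (by simp [Fin.le_def]; omega)
      have := hd0 k
      simp only [h, if_neg, not_false_iff]
      nlinarith
  have h1 : ∑ k : Fin n, (if (k : ℕ) < q then (1:ℝ) else 0) = q := by
    rw [aux (fun _ => (1:ℝ))]; simp
  have h2 := Finset.sum_le_sum (fun k (_ : k ∈ Finset.univ) => key k)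
  rw [Finset.sum_sub_distrib, aux μ] at h2
  have h3 : ∑ k : Fin n, t * (d k - (if (k : ℕ) < q then (1:ℝ) else 0)) = 0 := by
    rw [← Finset.mul_sum, Finset.sum_sub_distrib, hsum, h1, sub_self, mul_zero]
  linarith


/-- Fan's theorem: for a Hermitian matrix `A` with eigenvalues `μ` listed in decreasing
order with multiplicity, the sum `∑ ⟨xᵢ, A xᵢ⟩` over an orthonormal family `x₁, …, x_q`
is at most `∑_{i=1}^q μᵢ`, and the bound is attained by an orthonormal family of
eigenvectors for the eigenvalues `μ₁, …, μ_q`. -/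
theorem fan_maximum_principle {n : ℕ} (A : Matrix (Fin n) (Fin n) ℂ) (hA : A.IsHermitian)
    (μ : Fin n → ℝ) (hμ : Antitone μ)
    (hperm : ∃ e : Equiv.Perm (Fin n), ∀ i, μ (e i) = hA.eigenvalues i)
    (q : ℕ) (hq1 : 1 ≤ q) (hqn : q ≤ n) :
    (∀ x : Fin q → (Fin n → ℂ),
      (∀ i j, star (x i) ⬝ᵥ x j = if i = j then 1 else 0) →
      ∑ i, star (x i) ⬝ᵥ A.mulVec (x i) ≤ ((∑ i : Fin q, μ (Fin.castLE hqn i) : ℝ) : ℂ)) ∧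
    (∃ x : Fin q → (Fin n → ℂ),
      (∀ i j, star (x i) ⬝ᵥ x j = if i = j then 1 else 0) ∧
      (∀ i, A.mulVec (x i) = (μ (Fin.castLE hqn i) : ℂ) • x i) ∧
      ∑ i, star (x i) ⬝ᵥ A.mulVec (x i) = ((∑ i : Fin q, μ (Fin.castLE hqn i) : ℝ) : ℂ)) := by
  obtain ⟨e, he⟩ := hperm
  set U : Matrix (Fin n) (Fin n) ℂ := (hA.eigenvectorUnitary : Matrix (Fin n) (Fin n) ℂ)
    with hUdef
  have hUU : U * star U = 1 := mem_unitaryGroup_iff.mp hA.eigenvectorUnitary.2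
  have hUU' : star U * U = 1 := mem_unitaryGroup_iff'.mp hA.eigenvectorUnitary.2
  constructor
  · -- upper bound
    intro x hx
    set y : Fin q → (Fin n → ℂ) := fun i => star U *ᵥ x i with hydef
    have hsy : ∀ i, star (x i) ᵥ* U = star (y i) := by
      intro i
      simp only [hydef, star_mulVec, star_eq_conjTranspose, conjTranspose_conjTranspose]
    have hy_orth : ∀ i j, star (y i) ⬝ᵥ y j = if i = j then 1 else 0 := by
      intro i j
      rw [← hsy, ← dotProduct_mulVec, mulVec_mulVec, hUU, one_mulVec, hx]
    set c : Fin n → ℝ := fun j => ∑ i, Complex.normSq (y i j) with hcdef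
    have hform : ∀ i, star (x i) ⬝ᵥ A *ᵥ x i
        = ∑ j, (hA.eigenvalues j : ℂ) * (Complex.normSq (y i j) : ℂ) := by
      intro i
      conv_lhs => rw [hA.spectral_theorem, Unitary.conjStarAlgAut_apply]
      rw [← mulVec_mulVec, dotProduct_mulVec, ← vecMul_vecMul, hsy]
      show star (y i) ᵥ* diagonal (fun j => (hA.eigenvalues j : ℂ)) ⬝ᵥ (y i) = _
      simp only [dotProduct, vecMul_diagonal, Pi.star_apply, Function.comp_apply,
        Complex.normSq_eq_conj_mul_self, RCLike.star_def]
      exact Finset.sum_congr rfl fun j _ => by ring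
    have hmain : (∑ i, star (x i) ⬝ᵥ A *ᵥ x i)
        = ((∑ j, hA.eigenvalues j * c j : ℝ) : ℂ) := by
      calc ∑ i, star (x i) ⬝ᵥ A *ᵥ x i
          = ∑ i, ∑ j, (hA.eigenvalues j : ℂ) * (Complex.normSq (y i j) : ℂ) :=
            Finset.sum_congr rfl fun i _ => hform i
        _ = ∑ j, ∑ i, (hA.eigenvalues j : ℂ) * (Complex.normSq (y i j) : ℂ) :=
            Finset.sum_comm
        _ = ((∑ j, hA.eigenvalues j * c j : ℝ) : ℂ) := by
            simp only [hcdef]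
            push_cast [Finset.mul_sum]
            rfl
    have hc0 : ∀ j, 0 ≤ c j := fun j => Finset.sum_nonneg fun i _ => Complex.normSq_nonneg _
    have hcnorm : ∀ i : Fin q, ∑ j, Complex.normSq (y i j) = 1 := by
      intro i
      have h := hy_orth i i
      rw [if_pos rfl] at h
      have h2 : ((∑ j, Complex.normSq (y i j) : ℝ) : ℂ) = 1 := by
        rw [← h]
        push_cast [dotProduct, Complex.normSq_eq_conj_mul_self]
        exact Finset.sum_congr rfl fun j _ => by simp [RCLike.star_def]
      exact_mod_cast h2
    have hcsum : ∑ j, c j = q := by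
      simp only [hcdef]
      rw [Finset.sum_comm]
      simp [hcnorm]
    set Y : Matrix (Fin n) (Fin q) ℂ := Matrix.of fun j i => y i j with hYdef
    have hYY : Yᴴ * Y = 1 := by
      ext i j
      have := hy_orth i j
      simpa [Matrix.mul_apply, conjTranspose_apply, hYdef, Matrix.one_apply,
        dotProduct] using this
    set P : Matrix (Fin n) (Fin n) ℂ := Y * Yᴴ with hPdef
    have hPP : P * P = P := by
      rw [hPdef, Matrix.mul_assoc, ← Matrix.mul_assoc Yᴴ Y Yᴴ, hYY, Matrix.one_mul]
    have hPH : Pᴴ = P := by rw [hPdef, conjTranspose_mul, conjTranspose_conjTranspose]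
    have hPdiag : ∀ j, P j j = (c j : ℂ) := by
      intro j
      simp only [hPdef, Matrix.mul_apply, conjTranspose_apply, hYdef, Matrix.of_apply, hcdef]
      push_cast [Complex.normSq_eq_conj_mul_self]
      exact Finset.sum_congr rfl fun i _ => by simp [RCLike.star_def]; ring
    have hc1 : ∀ j, c j ≤ 1 := by
      intro j
      have h1 : (c j : ℂ) = ∑ k, (Complex.normSq (P j k) : ℂ) := by
        rw [← hPdiag j]
        conv_lhs => rw [← hPP]
        rw [Matrix.mul_apply]
        refine Finset.sum_congr rfl fun k _ => ?_
        have hkj : P k j = star (P j k) := by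
          conv_lhs => rw [← hPH]
          rfl
        rw [hkj]
        simp [RCLike.star_def, Complex.mul_conj]
      have h2 : c j = ∑ k, Complex.normSq (P j k) := by exact_mod_cast h1
      have h3 : Complex.normSq (P j j) ≤ ∑ k, Complex.normSq (P j k) :=
        Finset.single_le_sum (fun k _ => Complex.normSq_nonneg _) (Finset.mem_univ j)
      have h4 : Complex.normSq (P j j) = c j ^ 2 := by
        rw [hPdiag j, Complex.normSq_ofReal]; ring
      nlinarith [hc0 j]
    set d : Fin n → ℝ := fun k => c (e.symm k) with hddef
    have hdsum : ∑ k, d k = q := by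
      rw [← hcsum]
      exact e.symm.sum_comp c
    have hfin : ∑ j, hA.eigenvalues j * c j = ∑ k, μ k * d k := by
      rw [← Equiv.sum_comp e (fun k => μ k * d k)]
      refine Finset.sum_congr rfl fun j _ => ?_
      simp only [hddef, Equiv.symm_apply_apply, he j]
    have hreal := fan_real_key μ hμ hq1 hqn d (fun k => hc0 _) (fun k => hc1 _) hdsum
    rw [hmain, hfin]
    exact_mod_cast hreal
  · -- existence
    set x : Fin q → (Fin n → ℂ) :=
      fun i => ⇑(hA.eigenvectorBasis (e.symm (Fin.castLE hqn i))) with hxdef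
    have horth : ∀ i j, star (x i) ⬝ᵥ x j = if i = j then 1 else 0 := by
      intro i j
      rw [hxdef]
      beta_reduce
      rw [dotProduct_comm, ← EuclideanSpace.inner_eq_star_dotProduct,
        orthonormal_iff_ite.mp hA.eigenvectorBasis.orthonormal]
      congr 1
      simp only [eq_iff_iff]
      exact ⟨fun h => Fin.castLE_injective hqn (e.symm.injective h), fun h => by rw [h]⟩
    have heig : ∀ i, A.mulVec (x i) = (μ (Fin.castLE hqn i) : ℂ) • x i := by
      intro i
      rw [hxdef]
      have := hA.mulVec_eigenvectorBasis (e.symm (Fin.castLE hqn i))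
      rw [this, ← he (e.symm (Fin.castLE hqn i)), Equiv.apply_symm_apply]
      ext k
      simp [Complex.real_smul]
    refine ⟨x, horth, heig, ?_⟩
    have : ∀ i : Fin q, star (x i) ⬝ᵥ A.mulVec (x i) = (μ (Fin.castLE hqn i) : ℂ) := by
      intro i
      rw [heig i, dotProduct_smul, horth i i, if_pos rfl, smul_eq_mul, mul_one]
    rw [Finset.sum_congr rfl (fun i _ => this i)]
    push_cast
    rfl
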